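/- The polynomials f and g satisfy f(0,1) = g(0) ≠ 0 and ∂f/∂z(0,1) ≠ g'(0); consequently z = 0 is a simple root of the polynomial g(z) − f(z,1). -/

import Mathlib

open Polynomial intervalIntegral

/-- The `k`-th Legendre polynomial, defined via the Rodrigues formula. -/
noncomputable def leg (k : ℕ) : Polynomial ℝ :=
  C (1 / (2 ^ k * (k.factorial : ℝ))) * (fun q => derivative q)^[k] ((X ^ 2 - 1) ^ k)

/-- The right Radau polynomial `R⁻_{p+1} = P_{p+1} - P_p`. -/
noncomputable def radau (p : ℕ) : Polynomial ℝ := leg (p + 1) - leg p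

lemma monic_sq : ((X:ℝ[X]) ^ 2 - 1).Monic := by
  simpa using monic_X_pow_sub_C (1:ℝ) (n := 2) two_ne_zero

lemma natDeg_q (n : ℕ) : (((X:ℝ[X]) ^ 2 - 1) ^ n).natDegree = 2 * n := by
  rw [monic_sq.natDegree_pow]
  have : ((X:ℝ[X]) ^ 2 - 1).natDegree = 2 := by
    simpa using (natDegree_X_pow_sub_C (n := 2) (r := (1:ℝ)))
  rw [this, Nat.mul_comm]

lemma coeff_leg (n j : ℕ) :
    (leg n).coeff j = (1 / (2 ^ n * (n.factorial : ℝ))) *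
      (((j + n).descFactorial n : ℝ) * (((X:ℝ[X]) ^ 2 - 1) ^ n).coeff (j + n)) := by
  show ((C (1 / (2 ^ n * (n.factorial : ℝ))) * derivative^[n] ((X ^ 2 - 1) ^ n)).coeff j) = _
  rw [coeff_C_mul, coeff_iterate_derivative, nsmul_eq_mul]

lemma radau_coeff_succ (p : ℕ) :
    (radau p).coeff (p + 1) =
      (((2 * p + 2).descFactorial (p + 1) : ℝ)) / (2 ^ (p + 1) * ((p + 1).factorial : ℝ)) := by
  rw [radau, coeff_sub, coeff_leg, coeff_leg]
  have h1 : (((X:ℝ[X]) ^ 2 - 1) ^ (p + 1)).coeff (p + 1 + (p + 1)) = 1 := by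
    have := (monic_sq.pow (p+1)).coeff_natDegree
    rwa [natDeg_q, show 2 * (p+1) = p + 1 + (p + 1) by ring] at this
  have h2 : (((X:ℝ[X]) ^ 2 - 1) ^ p).coeff (p + 1 + p) = 0 := by
    apply coeff_eq_zero_of_natDegree_lt
    rw [natDeg_q]; omega
  rw [h1, h2]
  rw [show p + 1 + (p + 1) = 2 * p + 2 by ring]
  ring

lemma radau_coeff_succ_ne (p : ℕ) : (radau p).coeff (p + 1) ≠ 0 := by
  rw [radau_coeff_succ]
  apply div_ne_zero
  · have : (2 * p + 2).descFactorial (p + 1) ≠ 0 := by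
      intro h
      exact absurd (Nat.descFactorial_eq_zero_iff_lt.mp h) (by omega)
    exact_mod_cast this
  · positivity

lemma radau_natDegree (p : ℕ) : (radau p).natDegree ≤ p + 1 := by
  have key : ∀ n, (leg n).natDegree ≤ n := by
    intro n
    refine (natDegree_C_mul_le _ _).trans ?_
    refine (natDegree_iterate_derivative _ _).trans ?_
    rw [natDeg_q]; omega
  exact (natDegree_sub_le _ _).trans (by simp [key (p+1), (key p).trans (Nat.le_succ p)])

lemma E1 (p : ℕ) : (derivative^[p+1] (radau p)) = C ((p+1).factorial * (radau p).coeff (p+1)) := by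
  have hd : (derivative^[p+1] (radau p)).natDegree ≤ 0 := by
    refine (natDegree_iterate_derivative _ _).trans ?_
    have := radau_natDegree p; omega
  rw [eq_C_of_natDegree_le_zero hd]
  congr 1
  rw [coeff_iterate_derivative, Nat.zero_add, Nat.descFactorial_self, nsmul_eq_mul]

lemma E3 (p : ℕ) :
    (derivative^[p] (radau p)).eval 1 - (derivative^[p] (radau p)).eval (-1) =
      2 * (((1 + p).descFactorial p : ℝ) * (radau p).coeff (p + 1)) := by
  have hd : (derivative^[p] (radau p)).natDegree ≤ 1 := by
    refine (natDegree_iterate_derivative _ _).trans ?_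
    have := radau_natDegree p; omega
  have := eq_X_add_C_of_natDegree_le_one hd
  rw [this]
  simp only [eval_add, eval_mul, eval_C, eval_X, coeff_iterate_derivative, nsmul_eq_mul]
  ring_nf

/-- The numerator polynomial `f(z, 1)` arising from integration by parts of the Radau kernel. -/
noncomputable def DGf (p : ℕ) : Polynomial ℂ :=
  C ((-1 : ℂ) ^ (p + 1) / 2) *
    ∑ k ∈ Finset.Icc 1 (p + 1),
      C ((2 : ℂ) ^ k * ((((fun q => derivative q)^[k] (radau p)).eval 1 : ℝ) : ℂ)) *
        X ^ (p + 1 - k)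

/-- The denominator polynomial `g(z)` arising from integration by parts of the Radau kernel. -/
noncomputable def DGg (p : ℕ) : Polynomial ℂ :=
  X ^ (p + 1) +
    C ((-1 : ℂ) ^ (p + 1) / 2) *
      ∑ k ∈ Finset.Icc 1 (p + 1),
        C ((2 : ℂ) ^ k * ((((fun q => derivative q)^[k] (radau p)).eval (-1) : ℝ) : ℂ)) *
          X ^ (p + 1 - k)

lemma sum_coeff_zero (p : ℕ) (v : ℝ) :
    (∑ k ∈ Finset.Icc 1 (p + 1),
      C ((2 : ℂ) ^ k * ((((fun q => derivative q)^[k] (radau p)).eval v : ℝ) : ℂ)) *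
        X ^ (p + 1 - k)).coeff 0 =
      (2 : ℂ) ^ (p + 1) * (((derivative^[p+1] (radau p)).eval v : ℝ) : ℂ) := by
  rw [finset_sum_coeff, Finset.sum_eq_single (p+1)]
  · rw [coeff_C_mul, coeff_X_pow, if_pos (by omega), mul_one]
  · intro k hk hne
    rw [Finset.mem_Icc] at hk
    rw [coeff_C_mul, coeff_X_pow, if_neg (by omega), mul_zero]
  · intro h; exact absurd (Finset.mem_Icc.mpr ⟨by omega, le_refl _⟩) h

lemma sum_coeff_one (p : ℕ) (hp : 1 ≤ p) (v : ℝ) :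
    (∑ k ∈ Finset.Icc 1 (p + 1),
      C ((2 : ℂ) ^ k * ((((fun q => derivative q)^[k] (radau p)).eval v : ℝ) : ℂ)) *
        X ^ (p + 1 - k)).coeff 1 =
      (2 : ℂ) ^ p * (((derivative^[p] (radau p)).eval v : ℝ) : ℂ) := by
  rw [finset_sum_coeff, Finset.sum_eq_single p]
  · rw [coeff_C_mul, coeff_X_pow, if_pos (by omega), mul_one]
  · intro k hk hne
    rw [Finset.mem_Icc] at hk
    rw [coeff_C_mul, coeff_X_pow, if_neg (by omega), mul_zero]
  · intro h; exact absurd (Finset.mem_Icc.mpr ⟨hp, by omega⟩) h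

lemma sum0_coeff_one (v : ℝ) :
    (∑ k ∈ Finset.Icc 1 (0 + 1),
      C ((2 : ℂ) ^ k * ((((fun q => derivative q)^[k] (radau 0)).eval v : ℝ) : ℂ)) *
        X ^ (0 + 1 - k)).coeff 1 = 0 := by
  rw [finset_sum_coeff]
  simp [coeff_C_mul, coeff_X_pow]

lemma deriv_eval_zero (q : Polynomial ℂ) : (derivative q).eval 0 = q.coeff 1 := by
  rw [← coeff_zero_eq_eval_zero, coeff_derivative]
  norm_num

theorem DG_simple_root_at_zero (p : ℕ) :
    (DGf p).eval 0 = (DGg p).eval 0 ∧ (DGg p).eval 0 ≠ 0 ∧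
      (derivative (DGf p)).eval 0 ≠ (derivative (DGg p)).eval 0 ∧
      (DGg p - DGf p).rootMultiplicity 0 = 1 := by
  set A : ℝ := ((p+1).factorial : ℝ) * (radau p).coeff (p+1) with hAdef
  have hA : A ≠ 0 :=
    mul_ne_zero (Nat.cast_ne_zero.mpr (Nat.factorial_ne_zero _)) (radau_coeff_succ_ne p)
  have hev : ∀ v : ℝ, (derivative^[p+1] (radau p)).eval v = A := by
    intro v; rw [E1]; simp [hAdef]
  have hc : ((-1 : ℂ) ^ (p + 1) / 2) ≠ 0 := by
    apply div_ne_zero _ two_ne_zero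
    exact pow_ne_zero _ (by norm_num)
  have f0 : (DGf p).coeff 0 = ((-1 : ℂ) ^ (p + 1) / 2) * ((2:ℂ) ^ (p+1) * (A : ℂ)) := by
    rw [DGf, coeff_C_mul, sum_coeff_zero, hev]
  have g0 : (DGg p).coeff 0 = ((-1 : ℂ) ^ (p + 1) / 2) * ((2:ℂ) ^ (p+1) * (A : ℂ)) := by
    rw [DGg, coeff_add, coeff_C_mul, sum_coeff_zero, hev, coeff_X_pow, if_neg (by omega), zero_add]
  have hfg1 : (DGf p).coeff 1 ≠ (DGg p).coeff 1 := by
    rcases Nat.eq_zero_or_pos p with rfl | hp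
    · rw [DGf, DGg, coeff_C_mul, coeff_add, coeff_C_mul, sum0_coeff_one, sum0_coeff_one,
        coeff_X_pow, if_pos rfl]
      simp
    · rw [DGf, DGg, coeff_C_mul, coeff_add, coeff_C_mul, sum_coeff_one p hp,
        sum_coeff_one p hp, coeff_X_pow, if_neg (by omega), zero_add]
      intro h
      have h2 : (((derivative^[p] (radau p)).eval 1 : ℝ) : ℂ) =
          (((derivative^[p] (radau p)).eval (-1) : ℝ) : ℂ) :=
        mul_left_cancel₀ (pow_ne_zero p (two_ne_zero)) (mul_left_cancel₀ hc h)
      have h3 : (derivative^[p] (radau p)).eval 1 = (derivative^[p] (radau p)).eval (-1) :=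
        Complex.ofReal_injective h2
      have h4 := E3 p
      rw [h3, sub_self] at h4
      have hd : ((1 + p).descFactorial p : ℝ) ≠ 0 := by
        have : (1 + p).descFactorial p ≠ 0 := by
          intro h; exact absurd (Nat.descFactorial_eq_zero_iff_lt.mp h) (by omega)
        exact_mod_cast this
      exact (mul_ne_zero two_ne_zero (mul_ne_zero hd (radau_coeff_succ_ne p))) h4.symm
  have h1ne : (DGg p - DGf p).coeff 1 ≠ 0 := by
    rw [coeff_sub]
    exact sub_ne_zero.mpr (Ne.symm hfg1)
  refine ⟨?_, ?_, ?_, ?_⟩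
  · rw [← coeff_zero_eq_eval_zero, ← coeff_zero_eq_eval_zero, f0, g0]
  · rw [← coeff_zero_eq_eval_zero, g0]
    exact mul_ne_zero hc (mul_ne_zero (pow_ne_zero _ two_ne_zero)
      (Complex.ofReal_ne_zero.mpr hA))
  · rw [deriv_eval_zero, deriv_eval_zero]
    exact hfg1
  · rw [Polynomial.rootMultiplicity_eq_natTrailingDegree']
    have hne : DGg p - DGf p ≠ 0 := fun h => h1ne (by rw [h]; simp)
    refine le_antisymm (natTrailingDegree_le_of_ne_zero h1ne) (le_natTrailingDegree hne ?_)
    intro m hm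
    interval_cases m
    rw [coeff_sub, f0, g0, sub_self]
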